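/- Let n ≥ 3 and let H be the complete (n-1)-uniform hypergraph on {1,...,n} (every (n-1)-element subset of {1,...,n} is a hyperedge). Then dim HC_0(Δ(H)) = n and dim HC_{-1}(Δ(H)) = 1. -/

import Mathlib

open Finset

/-! ## The cyclic coloring complex machinery.

Vertices `1, ..., n` of the paper are represented by `Fin n` (vertex `i ↦ i - 1`);
in particular the distinguished vertex `1` is the element of `Fin n` whose value is `0`.

An ordered set partition `(B_1, ..., B_{m+1})` of `{1, ..., n}` is represented by a
function `B : Fin (m+1) → Finset (Fin n)`.  Each cyclic equivalence class
`[B_1, ..., B_{m+1}]` is represented by its unique representative having `1 ∈ B_1`. -/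

/-- Raw blocks: an `(m+1)`-tuple of finsets of vertices. -/
abbrev Blocks (n m : ℕ) := Fin (m + 1) → Finset (Fin n)

/-- `B` is an ordered set partition of `Fin n` into `m + 1` nonempty blocks whose first
block contains the vertex with value `0` (i.e. the vertex called `1` in the paper);
such functions are canonical representatives of the cyclic equivalence classes
`[B_1, ..., B_{m+1}]`. -/
def IsCPartition {n m : ℕ} (B : Blocks n m) : Prop :=
  (∀ i, (B i).Nonempty) ∧
  (∀ i j, i ≠ j → Disjoint (B i) (B j)) ∧
  (∀ v : Fin n, ∃ i, v ∈ B i) ∧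
  (∀ v : Fin n, v.val = 0 → v ∈ B 0)

/-- Merging blocks `j` and `j + 1` of a partition into `m + 2` blocks. -/
def mergeBlocks {n m : ℕ} (B : Blocks n (m + 1)) (j : Fin (m + 1)) : Blocks n m :=
  fun i =>
    if i.val < j.val then B i.castSucc
    else if i.val = j.val then B i.castSucc ∪ B i.succ
    else B i.succ

/-- Merging the last block into the first block:
`[B_1 ∪ B_{m+2}, B_2, ..., B_{m+1}]`. -/
def mergeWrap {n m : ℕ} (B : Blocks n (m + 1)) : Blocks n m :=
  fun i => if i.val = 0 then B 0 ∪ B (Fin.last (m + 1)) else B i.castSucc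

/-- The chain group spanned (over `ℚ`, a field of characteristic zero) by the classes of
ordered set partitions of `Fin n` into `m + 1` nonempty blocks satisfying the predicate
`Q` (a predicate on the underlying set of blocks).  This is the degree `r = m - 1` term
of the corresponding chain complex. -/
abbrev CChain (n : ℕ) (Q : Finset (Finset (Fin n)) → Prop) (m : ℕ) : Type :=
  {B : Blocks n m // IsCPartition B ∧ Q (Finset.univ.image B)} →₀ ℚ

open Classical in
/-- The basis element of `CChain n Q m` corresponding to `B`, or `0` if `B` is not a
partition satisfying `Q`. -/
noncomputable def basisElt (n : ℕ) (Q : Finset (Finset (Fin n)) → Prop) (m : ℕ)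
    (B : Blocks n m) : CChain n Q m :=
  if h : IsCPartition B ∧ Q (Finset.univ.image B) then Finsupp.single ⟨B, h⟩ 1 else 0

/-- The boundary of a single class `[B_1, ..., B_{r+2}]` (with `r = m`):
`∂_r [B_1, ..., B_{r+2}] = ∑_{i=1}^{r+1} (-1)^{i+1} [B_1, ..., B_i ∪ B_{i+1}, ..., B_{r+2}]
+ (-1)^{r+3} [B_1 ∪ B_{r+2}, B_2, ..., B_{r+1}]`, where any term that does not satisfy
`Q` is set to zero (for subcomplexes this never happens, and for quotient complexes this
is the induced boundary). -/
noncomputable def bdryTerm (n : ℕ) (Q : Finset (Finset (Fin n)) → Prop) (m : ℕ)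
    (B : Blocks n (m + 1)) : CChain n Q m :=
  (∑ j : Fin (m + 1), ((-1 : ℚ) ^ ((j : ℕ) + 2)) • basisElt n Q m (mergeBlocks B j)) +
    ((-1 : ℚ) ^ (m + 3)) • basisElt n Q m (mergeWrap B)

/-- The boundary map `∂_m : C_m → C_{m-1}` (from partitions into `m + 2` blocks to
partitions into `m + 1` blocks). -/
noncomputable def bd (n : ℕ) (Q : Finset (Finset (Fin n)) → Prop) (m : ℕ) :
    CChain n Q (m + 1) →ₗ[ℚ] CChain n Q m :=
  Finsupp.linearCombination ℚ (fun P => bdryTerm n Q m P.1)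

/-- The chain complex, reindexed over `ℕ`: `Ch n Q t` is the degree `t - 2` chain group
`C_{t-2}` (so `Ch 0 = C_{-2} = 0` and `Ch (t+1) = C_{t-1}`). -/
noncomputable def Ch (n : ℕ) (Q : Finset (Finset (Fin n)) → Prop) : ℕ → Type
  | 0 => Empty →₀ ℚ
  | (t + 1) => CChain n Q t

noncomputable instance instChAddCommGroup (n : ℕ) (Q : Finset (Finset (Fin n)) → Prop) :
    ∀ s, AddCommGroup (Ch n Q s)
  | 0 => inferInstanceAs (AddCommGroup (Empty →₀ ℚ))
  | (t + 1) => inferInstanceAs (AddCommGroup (CChain n Q t))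

noncomputable instance instChModule (n : ℕ) (Q : Finset (Finset (Fin n)) → Prop) :
    ∀ s, Module ℚ (Ch n Q s)
  | 0 => inferInstanceAs (Module ℚ (Empty →₀ ℚ))
  | (t + 1) => inferInstanceAs (Module ℚ (CChain n Q t))

/-- The boundary map `∂_{s-1} : C_{s-1} → C_{s-2}` in the reindexed complex;
`bdry n Q 0` is the zero map `∂_{-1} : C_{-1} → 0`. -/
noncomputable def bdry (n : ℕ) (Q : Finset (Finset (Fin n)) → Prop) :
    ∀ s, Ch n Q (s + 1) →ₗ[ℚ] Ch n Q s
  | 0 => 0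
  | (t + 1) => bd n Q t

/-- `HCmod n Q s` is the homology group `HC_{s-1} = ker ∂_{s-1} / im ∂_s` of the chain
complex determined by `Q`. -/
noncomputable abbrev HCmod (n : ℕ) (Q : Finset (Finset (Fin n)) → Prop) (s : ℕ) :=
  LinearMap.ker (bdry n Q s) ⧸
    Submodule.comap (LinearMap.ker (bdry n Q s)).subtype
      (LinearMap.range (bdry n Q (s + 1)))

/-- `HCdim n Q r` is the dimension of the homology group `HC_r` (for `r ≥ -1`) of the
chain complex determined by `Q`. -/
noncomputable def HCdim (n : ℕ) (Q : Finset (Finset (Fin n)) → Prop) (r : ℤ) : ℕ :=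
  Module.finrank ℚ (HCmod n Q (r + 1).toNat)

/-- Binomial coefficient `C(a, b)` with an integer lower index (zero when `b < 0`). -/
def chooseZ (a : ℕ) (b : ℤ) : ℕ := if b < 0 then 0 else a.choose b.toNat

/-- The predicate defining `Δ(H)`: some block contains a hyperedge. -/
def QsomeBlockHasEdge (n : ℕ) (isEdge : Finset (Fin n) → Prop) :
    Finset (Finset (Fin n)) → Prop :=
  fun blocks => ∃ S ∈ blocks, ∃ e, isEdge e ∧ e ⊆ S

/-- The predicate defining `Δ(H)^C = Δ(E_n)/Δ(H)`: no block contains a hyperedge. -/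
def QnoBlockHasEdge (n : ℕ) (isEdge : Finset (Fin n) → Prop) :
    Finset (Finset (Fin n)) → Prop :=
  fun blocks => ∀ S ∈ blocks, ∀ e, isEdge e → ¬ e ⊆ S

/-- The predicate defining `Δ(E_n)`: all partitions are allowed. -/
def Qtrue (n : ℕ) : Finset (Finset (Fin n)) → Prop := fun _ => True

/-! ### Auxiliary lemmas for the proof -/

section Aux

/-- Sum of block cardinalities of a partition is `n`. -/
lemma aux_sum_card_blocks {n m : ℕ} {B : Blocks n m} (h : IsCPartition B) :
    ∑ i, (B i).card = n := by
  classical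
  obtain ⟨-, hdisj, hcov, -⟩ := h
  have hbU : (Finset.univ.biUnion B) = (Finset.univ : Finset (Fin n)) := by
    ext v
    simp only [Finset.mem_biUnion, Finset.mem_univ, true_and, iff_true]
    exact hcov v
  rw [← Finset.card_biUnion (fun i _ j _ hij => hdisj i j hij), hbU, Finset.card_univ,
    Fintype.card_fin]

/-- There is no partition of `Fin n` into 3 blocks one of which contains an
`(n-1)`-set, for `n ≥ 3`. -/
lemma aux_isEmpty2 (n : ℕ) (hn : 3 ≤ n) :
    IsEmpty {B : Blocks n 2 // IsCPartition B ∧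
      QsomeBlockHasEdge n (fun e => e.card = n - 1) (Finset.univ.image B)} := by
  classical
  constructor
  rintro ⟨B, hB, S, hS, e, he, heS⟩
  obtain ⟨i, -, rfl⟩ := Finset.mem_image.mp hS
  have hcard : n - 1 ≤ (B i).card := he ▸ Finset.card_le_card heS
  have hsum := aux_sum_card_blocks hB
  have h1 : ∀ j, 1 ≤ (B j).card := fun j => Finset.card_pos.mpr (hB.1 j)
  have hsplit := (Finset.add_sum_erase Finset.univ (fun j => (B j).card)
    (Finset.mem_univ i)).symm
  have h2 : 2 ≤ ∑ j ∈ Finset.univ.erase i, (B j).card := by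
    calc 2 = ∑ _j ∈ Finset.univ.erase i, 1 := by
          rw [Finset.sum_const, smul_eq_mul, mul_one,
            Finset.card_erase_of_mem (Finset.mem_univ i), Finset.card_univ,
            Fintype.card_fin]
      _ ≤ _ := Finset.sum_le_sum (fun j _ => h1 j)
  omega

lemma aux_bdryTerm0 (n : ℕ) (Q : Finset (Finset (Fin n)) → Prop) (B : Blocks n 1) :
    bdryTerm n Q 0 B = 0 := by
  have hmw : mergeBlocks B 0 = mergeWrap B := by
    funext i
    fin_cases i
    rfl
  rw [bdryTerm, Fin.sum_univ_one, hmw]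
  norm_num

lemma aux_bd0 (n : ℕ) (Q : Finset (Finset (Fin n)) → Prop) : bd n Q 0 = 0 := by
  apply LinearMap.ext
  intro x
  simp [bd, Finsupp.linearCombination_apply, Finsupp.sum, aux_bdryTerm0]

lemma aux_bd1 (n : ℕ) (hn : 3 ≤ n) :
    bd n (QsomeBlockHasEdge n (fun e => e.card = n - 1)) 1 = 0 := by
  have he := aux_isEmpty2 n hn
  apply LinearMap.ext
  intro x
  have hx : x = 0 := Finsupp.ext fun a => he.elim a
  simp [hx]

/-- The homology is the whole middle group when both boundary maps vanish. -/
noncomputable def aux_hcEquiv {M N P : Type*} [AddCommGroup M] [Module ℚ M]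
    [AddCommGroup N] [Module ℚ N] [AddCommGroup P] [Module ℚ P]
    (f : M →ₗ[ℚ] N) (g : P →ₗ[ℚ] M) (hf : f = 0) (hg : g = 0) :
    ((LinearMap.ker f) ⧸ Submodule.comap (LinearMap.ker f).subtype
      (LinearMap.range g)) ≃ₗ[ℚ] M := by
  subst hf; subst hg
  refine (Submodule.quotEquivOfEqBot _ ?_).trans
    ((LinearEquiv.ofEq _ _ LinearMap.ker_zero).trans Submodule.topEquiv)
  rw [LinearMap.range_zero, Submodule.comap_bot, Submodule.ker_subtype]

/-- The canonical blocks for the degree-1 partitions: `x = 0` gives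
`({0}, {0}ᶜ)`, `x ≠ 0` gives `({x}ᶜ, {x})`. -/
noncomputable def auxB (n : ℕ) (x : Fin n) : Blocks n 1 :=
  fun i => if ((i = 0) ↔ (x.val = 0)) then {x} else {x}ᶜ

lemma auxB_mem (n : ℕ) (hn : 3 ≤ n) (x : Fin n) :
    IsCPartition (auxB n x) ∧
      QsomeBlockHasEdge n (fun e => e.card = n - 1) (Finset.univ.image (auxB n x)) := by
  classical
  haveI : NeZero n := ⟨by omega⟩
  have hcompl_card : ({x}ᶜ : Finset (Fin n)).card = n - 1 := by
    rw [Finset.card_compl, Finset.card_singleton, Fintype.card_fin]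
  have hcne : ({x}ᶜ : Finset (Fin n)).Nonempty := by
    rw [← Finset.card_pos, hcompl_card]; omega
  refine ⟨⟨?_, ?_, ?_, ?_⟩, ?_⟩
  · intro i
    by_cases h : (i = 0) ↔ (x.val = 0) <;> simp [auxB, h, hcne, -Fin.val_eq_zero_iff]
  · intro i j hij
    by_cases hi : (i = 0) ↔ (x.val = 0) <;> by_cases hj : (j = 0) ↔ (x.val = 0)
    · exfalso; apply hij; fin_cases i <;> fin_cases j <;> simp_all
    · simp [auxB, hi, hj, disjoint_compl_right, -Fin.val_eq_zero_iff]
    · simp [auxB, hi, hj, disjoint_compl_left, -Fin.val_eq_zero_iff]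
    · exfalso; apply hij; fin_cases i <;> fin_cases j <;> simp_all
  · intro v
    by_cases hv : v = x
    · refine ⟨if x.val = 0 then 0 else 1, ?_⟩
      subst hv
      by_cases hx : v.val = 0 <;> simp [auxB, hx]
    · refine ⟨if x.val = 0 then 1 else 0, ?_⟩
      by_cases hx : x.val = 0 <;> simp [auxB, hx, hv]
  · intro v hv
    by_cases hx : x.val = 0
    · have : v = x := Fin.ext (by omega)
      subst this
      simp [auxB, hx]
    · have : v ≠ x := fun h => hx (h ▸ hv)
      simp [auxB, hx, this]
  · refine ⟨{x}ᶜ, ?_, {x}ᶜ, hcompl_card, subset_rfl⟩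
    refine Finset.mem_image.mpr ⟨if x.val = 0 then 1 else 0, Finset.mem_univ _, ?_⟩
    by_cases hx : x.val = 0 <;> simp [auxB, hx]

lemma auxB_ne_compl (n : ℕ) (hn : 3 ≤ n) (x : Fin n) :
    ({x} : Finset (Fin n)) ≠ {x}ᶜ := by
  intro h
  have h1 : ({x} : Finset (Fin n)).card = 1 := Finset.card_singleton x
  have h2 : ({x}ᶜ : Finset (Fin n)).card = n - 1 := by
    rw [Finset.card_compl, Finset.card_singleton, Fintype.card_fin]
  rw [h, h2] at h1
  omega

end Aux
section Aux2

lemma aux_fin2_cases (i : Fin (1 + 1)) : i = 0 ∨ i = 1 := by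
  have hi := i.isLt
  have h2 : i.val = 0 ∨ i.val = 1 := by omega
  rcases h2 with h | h
  · exact Or.inl (Fin.ext h)
  · exact Or.inr (Fin.ext h)

lemma aux_bij1 (n : ℕ) (hn : 3 ≤ n) :
    Function.Bijective (fun x : Fin n =>
      (⟨auxB n x, auxB_mem n hn x⟩ :
        {B : Blocks n 1 // IsCPartition B ∧
          QsomeBlockHasEdge n (fun e => e.card = n - 1) (Finset.univ.image B)})) := by
  classical
  constructor
  · intro x y hxy
    have h := congrArg (fun z => z.1) hxy
    simp only at h
    by_cases hx : x.val = 0 <;> by_cases hy : y.val = 0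
    · exact Fin.ext (by omega)
    · exfalso
      have h0 := congrFun h 0
      simp only [auxB] at h0
      rw [if_pos (by simp [hx]), if_neg (by simp [hy])] at h0
      have hc := congrArg Finset.card h0
      rw [Finset.card_singleton, Finset.card_compl, Finset.card_singleton,
        Fintype.card_fin] at hc
      omega
    · exfalso
      have h0 := congrFun h 0
      simp only [auxB] at h0
      rw [if_neg (by simp [hx]), if_pos (by simp [hy])] at h0
      have hc := congrArg Finset.card h0
      rw [Finset.card_singleton, Finset.card_compl, Finset.card_singleton,
        Fintype.card_fin] at hc
      omega
    · have h1 := congrFun h 1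
      simp only [auxB] at h1
      rw [if_pos (by simp [Fin.ext_iff, hx]), if_pos (by simp [Fin.ext_iff, hy])] at h1
      exact Finset.singleton_injective h1
  · rintro ⟨B, hB, hQ⟩
    haveI : NeZero n := ⟨by omega⟩
    obtain ⟨hne, hdisj, hcov, hzero⟩ := hB
    obtain ⟨S, hS, e, he, heS⟩ := hQ
    obtain ⟨i, -, rfl⟩ := Finset.mem_image.mp hS
    have hcard : n - 1 ≤ (B i).card := he ▸ Finset.card_le_card heS
    have hsum : (B 0).card + (B 1).card = n := by
      have h := aux_sum_card_blocks ⟨hne, hdisj, hcov, hzero⟩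
      rw [Fin.sum_univ_two] at h
      exact h
    have h1 : ∀ j, 1 ≤ (B j).card := fun j => Finset.card_pos.mpr (hne j)
    have h10 := h1 0
    have h11 := h1 1
    have hcard' : n - 1 ≤ (B 0).card ∨ n - 1 ≤ (B 1).card := by
      rcases aux_fin2_cases i with hi | hi
      · left; rw [← hi]; exact hcard
      · right; rw [← hi]; exact hcard
    have hsub : ∀ j k : Fin (1 + 1), j ≠ k → B j ⊆ (B k)ᶜ := fun j k hjk v hv =>
      Finset.mem_compl.mpr (fun hvk => Finset.disjoint_left.mp (hdisj j k hjk) hv hvk)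
    have hc01 : B 0 = (B 1)ᶜ := Finset.eq_of_subset_of_card_le
      (hsub 0 1 (by simp [Fin.ext_iff]))
      (by rw [Finset.card_compl, Fintype.card_fin]; omega)
    have hc10 : B 1 = (B 0)ᶜ := Finset.eq_of_subset_of_card_le
      (hsub 1 0 (by simp [Fin.ext_iff]))
      (by rw [Finset.card_compl, Fintype.card_fin]; omega)
    have hone : (B 1).card = 1 ∨ (B 0).card = 1 := by
      rcases hcard' with h | h
      · left; omega
      · right; omega
    rcases hone with hone | hone
    · obtain ⟨y, hy⟩ := Finset.card_eq_one.mp hone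
      have hy0 : y.val ≠ 0 := by
        intro h
        have h0mem : y ∈ B 0 := hzero y h
        have h0mem1 : y ∈ B 1 := by rw [hy]; exact Finset.mem_singleton_self _
        rw [hc01, Finset.mem_compl] at h0mem
        exact h0mem h0mem1
      refine ⟨y, ?_⟩
      apply Subtype.ext
      funext j
      rcases aux_fin2_cases j with hj | hj <;> subst hj
      · show auxB n y 0 = B 0
        rw [hc01, hy]
        simp only [auxB]
        rw [if_neg (by simp [hy0])]
      · show auxB n y 1 = B 1
        rw [hy]
        simp only [auxB]
        rw [if_pos (by simp [Fin.ext_iff, hy0])]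
    · obtain ⟨y, hy⟩ := Finset.card_eq_one.mp hone
      have hy0 : y = 0 := by
        have h0mem : (0 : Fin n) ∈ B 0 := hzero 0 (Fin.val_zero n)
        rw [hy, Finset.mem_singleton] at h0mem
        exact h0mem.symm
      subst hy0
      refine ⟨0, ?_⟩
      apply Subtype.ext
      funext j
      rcases aux_fin2_cases j with hj | hj <;> subst hj
      · show auxB n 0 0 = B 0
        rw [hy]
        simp only [auxB]
        rw [if_pos (by simp)]
      · show auxB n 0 1 = B 1
        rw [hc10, hy]
        simp only [auxB]
        rw [if_neg (by simp [Fin.ext_iff])]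

lemma aux_card1 (n : ℕ) (hn : 3 ≤ n) :
    Nat.card {B : Blocks n 1 // IsCPartition B ∧
      QsomeBlockHasEdge n (fun e => e.card = n - 1) (Finset.univ.image B)} = n := by
  rw [← Nat.card_eq_of_bijective _ (aux_bij1 n hn), Nat.card_eq_fintype_card,
    Fintype.card_fin]

lemma aux_card0 (n : ℕ) (hn : 3 ≤ n) :
    Nat.card {B : Blocks n 0 // IsCPartition B ∧
      QsomeBlockHasEdge n (fun e => e.card = n - 1) (Finset.univ.image B)} = 1 := by
  classical
  haveI : NeZero n := ⟨by omega⟩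
  have hmem : IsCPartition (fun _ : Fin 1 => (Finset.univ : Finset (Fin n))) ∧
      QsomeBlockHasEdge n (fun e => e.card = n - 1)
        (Finset.univ.image (fun _ : Fin 1 => (Finset.univ : Finset (Fin n)))) := by
    refine ⟨⟨fun _ => Finset.univ_nonempty,
      fun i j hij => absurd (Fin.ext (by have := i.isLt; have := j.isLt; omega)) hij,
      fun v => ⟨0, Finset.mem_univ v⟩, fun v _ => Finset.mem_univ v⟩, ?_⟩
    obtain ⟨e, hsub, hcard⟩ := Finset.exists_subset_card_eq
      (show n - 1 ≤ (Finset.univ : Finset (Fin n)).card by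
        rw [Finset.card_univ, Fintype.card_fin]; omega)
    exact ⟨Finset.univ, Finset.mem_image.mpr ⟨0, Finset.mem_univ _, rfl⟩, e, hcard, hsub⟩
  haveI : Unique {B : Blocks n 0 // IsCPartition B ∧
      QsomeBlockHasEdge n (fun e => e.card = n - 1) (Finset.univ.image B)} :=
    { default := ⟨fun _ => Finset.univ, hmem⟩
      uniq := by
        rintro ⟨B, ⟨hne, hdisj, hcov, hzero⟩, hQ⟩
        apply Subtype.ext
        funext i
        have hi : i = 0 := Fin.ext (by have := i.isLt; omega)
        subst hi
        show B 0 = Finset.univ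
        ext v
        simp only [Finset.mem_univ, iff_true]
        obtain ⟨j, hj⟩ := hcov v
        have hj0 : j = 0 := Fin.ext (by have := j.isLt; omega)
        rwa [hj0] at hj }
  exact Nat.card_unique

end Aux2
/-- Let `n ≥ 3` and let `H` be the complete `(n-1)`-uniform hypergraph
on `{1, ..., n}`.  Then `dim HC_0(Δ(H)) = n` and `dim HC_{-1}(Δ(H)) = 1`. -/
theorem statement3 (n : ℕ) (hn : 3 ≤ n) :
    HCdim n (QsomeBlockHasEdge n (fun e => e.card = n - 1)) 0 = n ∧
    HCdim n (QsomeBlockHasEdge n (fun e => e.card = n - 1)) (-1) = 1 := by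
  set Q := QsomeBlockHasEdge n (fun e => e.card = n - 1) with hQdef
  constructor
  · show Module.finrank ℚ (HCmod n Q 1) = n
    have hf : bdry n Q 1 = 0 := aux_bd0 n Q
    have hg : bdry n Q 2 = 0 := aux_bd1 n hn
    have e1 := aux_hcEquiv (bdry n Q 1) (bdry n Q 2) hf hg
    rw [e1.finrank_eq]
    have : Module.finrank ℚ (CChain n Q 1) =
        Nat.card {B : Blocks n 1 // IsCPartition B ∧ Q (Finset.univ.image B)} :=
      Module.finrank_eq_nat_card_basis Finsupp.basisSingleOne
    exact this.trans (aux_card1 n hn)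
  · show Module.finrank ℚ (HCmod n Q 0) = 1
    have hf : bdry n Q 0 = 0 := rfl
    have hg : bdry n Q 1 = 0 := aux_bd0 n Q
    have e1 := aux_hcEquiv (bdry n Q 0) (bdry n Q 1) hf hg
    rw [e1.finrank_eq]
    have : Module.finrank ℚ (CChain n Q 0) =
        Nat.card {B : Blocks n 0 // IsCPartition B ∧ Q (Finset.univ.image B)} :=
      Module.finrank_eq_nat_card_basis Finsupp.basisSingleOne
    exact this.trans (aux_card0 n hn)
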